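/- arXiv:2402.06412 — 5 statements merged into one kernel-verified Lean document; each statement's English description precedes it below -/
import Mathlib

section
/- If f_i(x) = (1/2) x^T A_i x + b_i^T x + c_i with A_i symmetric d×d matrices, and A = (1/n) Σ_{i=1}^n A_i, then for all x, u_1, ..., u_n in R^d, ||(1/n) Σ_{i=1}^n (∇f_i(x+u_i) - ∇f_i(x))||^2 ≤ 2 (max_i ||A_i - A||)^2 · (1/n) Σ_{i=1}^n ||u_i||^2 + 2 ((1/n) Σ_{i=1}^n ||A_i||)^2 · ||(1/n) Σ_{i=1}^n u_i||^2. -/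
open scoped BigOperators
open RealInnerProductSpace

section Aux
variable {E : Type*} [NormedAddCommGroup E] [InnerProductSpace ℝ E] [CompleteSpace E]

lemma grad_quad (T : E →L[ℝ] E) (hT : ∀ v w : E, ⟪T v, w⟫ = ⟪v, T w⟫)
    (b : E) (c : ℝ) (y : E) :
    HasGradientAt (fun z => (1/2) * ⟪z, T z⟫ + ⟪b, z⟫ + c) (T y + b) y := by
  rw [hasGradientAt_iff_hasFDerivAt]
  have h1 : HasFDerivAt (fun z : E => ⟪z, T z⟫)
      ((fderivInnerCLM ℝ (y, T y)).comp ((ContinuousLinearMap.id ℝ E).prod T)) y :=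
    (hasFDerivAt_id y).inner ℝ (T.hasFDerivAt)
  have h2 : HasFDerivAt (fun z : E => ⟪b, z⟫) (innerSL ℝ b) y := (innerSL ℝ b).hasFDerivAt
  have h3 := ((h1.const_mul (1/2)).add h2).add_const c
  refine h3.congr_fderiv (Eq.symm ?_)
  ext v
  simp only [InnerProductSpace.toDual_apply_apply, ContinuousLinearMap.add_apply,
    ContinuousLinearMap.smul_apply, ContinuousLinearMap.comp_apply,
    ContinuousLinearMap.prod_apply, ContinuousLinearMap.coe_id, id_eq,
    fderivInnerCLM_apply, innerSL_apply_apply, smul_eq_mul, inner_add_left]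
  rw [ContinuousLinearMap.id_apply, ← hT y v, real_inner_comm v (T y)]
  ring

omit [CompleteSpace E] in
lemma avg_norm_sq_le {n : ℕ} (hn : 0 < n) (v : Fin n → E) :
    ‖(n : ℝ)⁻¹ • ∑ i, v i‖ ^ 2 ≤ (n : ℝ)⁻¹ * ∑ i, ‖v i‖ ^ 2 := by
  have hn' : (0:ℝ) < n := by exact_mod_cast hn
  have h1 : ‖∑ i, v i‖ ≤ ∑ i, ‖v i‖ := norm_sum_le _ _
  have h2 : (∑ i, ‖v i‖) ^ 2 ≤ (n : ℝ) * ∑ i, ‖v i‖ ^ 2 := by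
    simpa using sq_sum_le_card_mul_sum_sq (s := (Finset.univ : Finset (Fin n)))
      (f := fun i => ‖v i‖)
  have h0 : (0:ℝ) ≤ ‖∑ i, v i‖ := norm_nonneg _
  rw [norm_smul, norm_inv, Real.norm_natCast]
  rw [mul_pow]
  have : ‖∑ i, v i‖ ^ 2 ≤ (n : ℝ) * ∑ i, ‖v i‖ ^ 2 := le_trans (by nlinarith) h2
  calc ((n:ℝ)⁻¹) ^ 2 * ‖∑ i, v i‖ ^ 2 ≤ ((n:ℝ)⁻¹) ^ 2 * ((n : ℝ) * ∑ i, ‖v i‖ ^ 2) := by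
        apply mul_le_mul_of_nonneg_left this (by positivity)
    _ = (n : ℝ)⁻¹ * ∑ i, ‖v i‖ ^ 2 := by field_simp

omit [InnerProductSpace ℝ E] [CompleteSpace E] in
lemma norm_add_sq_le_two (a b : E) : ‖a + b‖ ^ 2 ≤ 2 * ‖a‖ ^ 2 + 2 * ‖b‖ ^ 2 := by
  nlinarith [norm_add_le a b, norm_nonneg a, norm_nonneg b, norm_nonneg (a + b), sq_nonneg (‖a‖ - ‖b‖)]

end Aux

set_option maxHeartbeats 1000000 in
/-- For quadratics `f_i(x) = ½ xᵀA_i x + b_iᵀx + c_i` with `Ā = (1/n) ∑ A_i`,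
`‖(1/n)∑(∇f_i(x+u_i)-∇f_i(x))‖² ≤ 2 (max_i ‖A_i - Ā‖)² (1/n)∑‖u_i‖²
  + 2 ((1/n)∑‖A_i‖)² ‖(1/n)∑ u_i‖²`, operator norms throughout. -/
theorem stmt_2 {d n : ℕ} (hn : 0 < n)
    (A : Fin n → Matrix (Fin d) (Fin d) ℝ) (hA : ∀ i, (A i).IsSymm)
    (b : Fin n → EuclideanSpace ℝ (Fin d)) (c : Fin n → ℝ)
    (f : Fin n → EuclideanSpace ℝ (Fin d) → ℝ)
    (hf : ∀ i (x : EuclideanSpace ℝ (Fin d)),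
      f i x = (1 / 2) * (inner ℝ x (Matrix.toEuclideanCLM (𝕜 := ℝ) (A i) x) : ℝ)
        + (inner ℝ (b i) x : ℝ) + c i)
    (x : EuclideanSpace ℝ (Fin d)) (u : Fin n → EuclideanSpace ℝ (Fin d)) :
    ‖(n : ℝ)⁻¹ • (∑ i, (gradient (f i) (x + u i) - gradient (f i) x))‖ ^ 2
      ≤ 2 * (Finset.univ.sup' (Finset.univ_nonempty_iff.mpr ⟨⟨0, hn⟩⟩)
              (fun i => ‖Matrix.toEuclideanCLM (𝕜 := ℝ)
                (A i - (n : ℝ)⁻¹ • (∑ j, A j))‖)) ^ 2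
            * ((n : ℝ)⁻¹ * ∑ i, ‖u i‖ ^ 2)
        + 2 * ((n : ℝ)⁻¹ * ∑ i, ‖Matrix.toEuclideanCLM (𝕜 := ℝ) (A i)‖) ^ 2
            * ‖(n : ℝ)⁻¹ • (∑ i, u i)‖ ^ 2 := by
  classical
  set T : Fin n → ((EuclideanSpace ℝ (Fin d)) →L[ℝ] (EuclideanSpace ℝ (Fin d))) := fun i => Matrix.toEuclideanCLM (𝕜 := ℝ) (A i) with hT
  set Tb : (EuclideanSpace ℝ (Fin d)) →L[ℝ] (EuclideanSpace ℝ (Fin d)) :=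
    Matrix.toEuclideanCLM (𝕜 := ℝ) ((n : ℝ)⁻¹ • (∑ j, A j)) with hTb
  have hsym : ∀ i (v w : (EuclideanSpace ℝ (Fin d))), ⟪T i v, w⟫ = ⟪v, T i w⟫ := by
    intro i
    have hH : (A i).IsHermitian := by
      simpa [Matrix.IsHermitian, Matrix.conjTranspose_eq_transpose_of_trivial, Matrix.IsSymm] using hA i
    have hs := Matrix.isHermitian_iff_isSymmetric.mp hH
    intro v w
    have h1 := hs v w
    simpa [← Matrix.coe_toEuclideanCLM_eq_toEuclideanLin] using h1
  -- gradients
  have hg : ∀ i (y : (EuclideanSpace ℝ (Fin d))), gradient (f i) y = T i y + b i := by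
    intro i y
    have hfe : f i = fun z => (1/2) * ⟪z, T i z⟫ + ⟪b i, z⟫ + c i := funext (hf i)
    rw [hfe]
    exact (grad_quad (T i) (hsym i) (b i) (c i) y).gradient
  have hsum : ∑ i, (gradient (f i) (x + u i) - gradient (f i) x) = ∑ i, T i (u i) := by
    apply Finset.sum_congr rfl
    intro i _
    rw [hg, hg, map_add]
    abel
  rw [hsum]
  -- Tb as average of T
  have hTbavg : Tb = (n : ℝ)⁻¹ • ∑ j, T j := by
    rw [hTb, map_smul, map_sum]
  -- decomposition
  have hdec : (n : ℝ)⁻¹ • ∑ i, T i (u i)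
      = (n : ℝ)⁻¹ • (∑ i, (T i - Tb) (u i)) + Tb ((n : ℝ)⁻¹ • ∑ i, u i) := by
    simp only [ContinuousLinearMap.sub_apply, Finset.sum_sub_distrib, smul_sub,
      map_smul, map_sum]
    abel
  rw [hdec]
  set M : ℝ := Finset.univ.sup' (Finset.univ_nonempty_iff.mpr ⟨⟨0, hn⟩⟩)
      (fun i => ‖Matrix.toEuclideanCLM (𝕜 := ℝ) (A i - (n : ℝ)⁻¹ • (∑ j, A j))‖) with hM
  have hMi : ∀ i, ‖T i - Tb‖ ≤ M := by
    intro i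
    have h := Finset.le_sup' (f := fun i => ‖Matrix.toEuclideanCLM (𝕜 := ℝ)
        (A i - (n : ℝ)⁻¹ • (∑ j, A j))‖) (Finset.mem_univ i)
    rw [← hM] at h
    rwa [map_sub] at h
  have hM0 : 0 ≤ M := le_trans (norm_nonneg _) (hMi ⟨0, hn⟩)
  -- first term bound
  have hterm1 : ‖(n : ℝ)⁻¹ • (∑ i, (T i - Tb) (u i))‖ ^ 2
      ≤ M ^ 2 * ((n : ℝ)⁻¹ * ∑ i, ‖u i‖ ^ 2) := by
    have h1 := avg_norm_sq_le hn (fun i => (T i - Tb) (u i))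
    have h2 : ∀ i, ‖(T i - Tb) (u i)‖ ^ 2 ≤ M ^ 2 * ‖u i‖ ^ 2 := by
      intro i
      have hle : ‖(T i - Tb) (u i)‖ ≤ M * ‖u i‖ :=
        le_trans ((T i - Tb).le_opNorm (u i))
          (mul_le_mul_of_nonneg_right (hMi i) (norm_nonneg _))
      nlinarith [norm_nonneg ((T i - Tb) (u i)), norm_nonneg (u i)]
    calc ‖(n : ℝ)⁻¹ • (∑ i, (T i - Tb) (u i))‖ ^ 2
        ≤ (n : ℝ)⁻¹ * ∑ i, ‖(T i - Tb) (u i)‖ ^ 2 := h1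
      _ ≤ (n : ℝ)⁻¹ * ∑ i, M ^ 2 * ‖u i‖ ^ 2 := by
          apply mul_le_mul_of_nonneg_left (Finset.sum_le_sum fun i _ => h2 i) (by positivity)
      _ = M ^ 2 * ((n : ℝ)⁻¹ * ∑ i, ‖u i‖ ^ 2) := by
          rw [← Finset.mul_sum]; ring
  -- second term bound
  have hTbn : ‖Tb‖ ≤ (n : ℝ)⁻¹ * ∑ i, ‖T i‖ := by
    rw [hTbavg]
    have hns := norm_smul (α := ℝ)
      (β := EuclideanSpace ℝ (Fin d) →L[ℝ] EuclideanSpace ℝ (Fin d)) ((n:ℝ)⁻¹) (∑ j, T j)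
    rw [hns, norm_inv, Real.norm_natCast]
    exact mul_le_mul_of_nonneg_left (norm_sum_le _ _) (by positivity)
  have hterm2 : ‖Tb ((n : ℝ)⁻¹ • ∑ i, u i)‖ ^ 2
      ≤ ((n : ℝ)⁻¹ * ∑ i, ‖T i‖) ^ 2 * ‖(n : ℝ)⁻¹ • (∑ i, u i)‖ ^ 2 := by
    have h1 : ‖Tb ((n : ℝ)⁻¹ • ∑ i, u i)‖ ≤ ((n : ℝ)⁻¹ * ∑ i, ‖T i‖) * ‖(n : ℝ)⁻¹ • (∑ i, u i)‖ :=
      le_trans (Tb.le_opNorm _) (mul_le_mul_of_nonneg_right hTbn (norm_nonneg _))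
    calc ‖Tb ((n : ℝ)⁻¹ • ∑ i, u i)‖ ^ 2
        ≤ (((n : ℝ)⁻¹ * ∑ i, ‖T i‖) * ‖(n : ℝ)⁻¹ • (∑ i, u i)‖) ^ 2 :=
          pow_le_pow_left₀ (norm_nonneg _) h1 2
      _ = ((n : ℝ)⁻¹ * ∑ i, ‖T i‖) ^ 2 * ‖(n : ℝ)⁻¹ • (∑ i, u i)‖ ^ 2 := mul_pow _ _ _
  -- combine
  have hPQ : ‖(n : ℝ)⁻¹ • (∑ i, (T i - Tb) (u i)) + Tb ((n : ℝ)⁻¹ • ∑ i, u i)‖ ^ 2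
      ≤ 2 * ‖(n : ℝ)⁻¹ • (∑ i, (T i - Tb) (u i))‖ ^ 2
        + 2 * ‖Tb ((n : ℝ)⁻¹ • ∑ i, u i)‖ ^ 2 :=
    norm_add_sq_le_two _ _
  calc ‖(n : ℝ)⁻¹ • (∑ i, (T i - Tb) (u i)) + Tb ((n : ℝ)⁻¹ • ∑ i, u i)‖ ^ 2
      ≤ 2 * ‖(n : ℝ)⁻¹ • (∑ i, (T i - Tb) (u i))‖ ^ 2
        + 2 * ‖Tb ((n : ℝ)⁻¹ • ∑ i, u i)‖ ^ 2 := hPQ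
    _ ≤ 2 * (M ^ 2 * ((n : ℝ)⁻¹ * ∑ i, ‖u i‖ ^ 2))
        + 2 * (((n : ℝ)⁻¹ * ∑ i, ‖T i‖) ^ 2 * ‖(n : ℝ)⁻¹ • (∑ i, u i)‖ ^ 2) := by
        have := hterm1
        have := hterm2
        linarith
    _ = 2 * M ^ 2 * ((n : ℝ)⁻¹ * ∑ i, ‖u i‖ ^ 2)
        + 2 * ((n : ℝ)⁻¹ * ∑ i, ‖T i‖) ^ 2 * ‖(n : ℝ)⁻¹ • (∑ i, u i)‖ ^ 2 := by ring
end

section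
/- Let d = q·n with q a positive integer, let π be a uniformly random permutation of {1,...,d}, and define the PermK compressor C_i(x) = n · Σ_{j=q(i-1)+1}^{qi} x_{π_j} e_{π_j} for each i ∈ [n]. Then for every x ∈ R^d and every i ∈ [n]: (a) E[C_i(x)] = x; (b) E[||C_i(x) - x||^2] = (n-1) ||x||^2; (c) (1/n) Σ_{i=1}^n C_i(x) = x deterministically. -/
open scoped BigOperators

lemma sum_perm_apply {d : ℕ} (hd : 0 < d) {V : Type*} [AddCommGroup V] [Module ℝ V]
    (f : Fin d → V) (j : Fin d) :
    ∑ π : Equiv.Perm (Fin d), f (π j) = (d - 1).factorial • ∑ k, f k := by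
  have h1 : ∀ j' : Fin d, (∑ π : Equiv.Perm (Fin d), f (π j'))
      = ∑ π : Equiv.Perm (Fin d), f (π j) := by
    intro j'
    rw [← Equiv.sum_comp (Equiv.mulRight (Equiv.swap j j')) (fun π => f (π j))]
    refine Finset.sum_congr rfl fun π _ => ?_
    simp [Equiv.Perm.mul_apply, Equiv.swap_apply_left]
  have h2 : (d • ∑ π : Equiv.Perm (Fin d), f (π j)) = d.factorial • ∑ k, f k := by
    calc d • ∑ π : Equiv.Perm (Fin d), f (π j)
        = ∑ _j' : Fin d, ∑ π : Equiv.Perm (Fin d), f (π j) := by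
          rw [Finset.sum_const, Finset.card_univ, Fintype.card_fin]
      _ = ∑ j' : Fin d, ∑ π : Equiv.Perm (Fin d), f (π j') :=
          Finset.sum_congr rfl fun j' _ => (h1 j').symm
      _ = ∑ π : Equiv.Perm (Fin d), ∑ j' : Fin d, f (π j') := Finset.sum_comm
      _ = ∑ _π : Equiv.Perm (Fin d), ∑ k, f k :=
          Finset.sum_congr rfl fun π _ => Equiv.sum_comp π f
      _ = d.factorial • ∑ k, f k := by
          rw [Finset.sum_const, Finset.card_univ, Fintype.card_perm, Fintype.card_fin]
  have h3 : (d • ∑ π : Equiv.Perm (Fin d), f (π j))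
      = d • ((d - 1).factorial • ∑ k, f k) := by
    rw [h2, ← Nat.mul_factorial_pred hd.ne', mul_smul]
  have hd' : ((d : ℝ)) ≠ 0 := Nat.cast_ne_zero.mpr hd.ne'
  rw [← Nat.cast_smul_eq_nsmul ℝ, ← Nat.cast_smul_eq_nsmul ℝ (n := d)] at h3
  exact smul_right_injective V hd' h3

/-- PermK compressors. With `d = q·n`, a uniformly random permutation `π` of
`{1,…,d}` and `C_i(x) = n ∑_{j=q(i-1)+1}^{qi} x_{π_j} e_{π_j}`, for all `x` and `i`:
(a) `E[C_i(x)] = x`; (b) `E‖C_i(x) - x‖² = (n-1)‖x‖²`;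
(c) `(1/n) ∑_i C_i(x) = x` deterministically. Expectation = uniform average over `π`. -/
theorem stmt_5 {n q : ℕ} (hn : 0 < n) (hq : 0 < q) (d : ℕ) (hd : d = q * n)
    (C : Fin n → Equiv.Perm (Fin d) → EuclideanSpace ℝ (Fin d) → EuclideanSpace ℝ (Fin d))
    (hC : ∀ (i : Fin n) (π : Equiv.Perm (Fin d)) (x : EuclideanSpace ℝ (Fin d)),
      C i π x = (n : ℝ) •
        ∑ j ∈ Finset.univ.filter
            (fun j : Fin d => q * (i : ℕ) ≤ (j : ℕ) ∧ (j : ℕ) < q * ((i : ℕ) + 1)),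
          EuclideanSpace.single (π j) (x (π j)))
    (x : EuclideanSpace ℝ (Fin d)) (i : Fin n) :
    ((Fintype.card (Equiv.Perm (Fin d)) : ℝ)⁻¹ • (∑ π : Equiv.Perm (Fin d), C i π x) = x)
    ∧ ((Fintype.card (Equiv.Perm (Fin d)) : ℝ)⁻¹
          * (∑ π : Equiv.Perm (Fin d), ‖C i π x - x‖ ^ 2) = ((n : ℝ) - 1) * ‖x‖ ^ 2)
    ∧ (∀ π : Equiv.Perm (Fin d), (n : ℝ)⁻¹ • (∑ i' : Fin n, C i' π x) = x) := by
  have hd0 : 0 < d := hd ▸ Nat.mul_pos hq hn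
  set S : Finset (Fin d) := Finset.univ.filter
      (fun j : Fin d => q * (i : ℕ) ≤ (j : ℕ) ∧ (j : ℕ) < q * ((i : ℕ) + 1)) with hSdef
  -- cardinality of the permutation group
  have hN : ((Fintype.card (Equiv.Perm (Fin d)) : ℝ)) = (d.factorial : ℝ) := by
    rw [Fintype.card_perm, Fintype.card_fin]
  -- basic nonvanishing facts
  have hn' : ((n : ℝ)) ≠ 0 := Nat.cast_ne_zero.mpr hn.ne'
  have hq' : ((q : ℝ)) ≠ 0 := Nat.cast_ne_zero.mpr hq.ne'
  have hf' : (((d - 1).factorial : ℝ)) ≠ 0 := Nat.cast_ne_zero.mpr (Nat.factorial_ne_zero _)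
  have hfact : ((d.factorial : ℝ)) = ((q : ℝ) * n) * ((d - 1).factorial : ℝ) := by
    rw [← Nat.mul_factorial_pred hd0.ne', hd]; push_cast; ring
  -- sum of coordinate singles
  have hxsum : ∑ k : Fin d, EuclideanSpace.single k (x k) = x := by
    ext m
    rw [WithLp.ofLp_sum, Finset.sum_apply]
    simp [EuclideanSpace.single_apply]
  -- norm squared as coordinate sum
  have hns : ∀ y : EuclideanSpace ℝ (Fin d), ‖y‖ ^ 2 = ∑ m, (y m) ^ 2 := by
    intro y
    rw [EuclideanSpace.norm_eq, Real.sq_sqrt (by positivity)]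
    simp [Real.norm_eq_abs, sq_abs]
  -- cardinality of the block
  have hScard : S.card = q := by
    have hmu : q * ((i : ℕ) + 1) = q * (i : ℕ) + q := by ring
    have key : S.card = (Finset.range q).card := by
      apply Finset.card_bij (fun (j : Fin d) _ => (j : ℕ) - q * (i : ℕ))
      · intro a ha
        simp only [hSdef, Finset.mem_filter, Finset.mem_univ, true_and] at ha
        simp only [Finset.mem_range]; omega
      · intro a ha b hb hab
        simp only [hSdef, Finset.mem_filter, Finset.mem_univ, true_and] at ha hb
        exact Fin.ext (by omega)
      · intro t ht
        simp only [Finset.mem_range] at ht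
        have h1 : q * ((i : ℕ) + 1) ≤ q * n := Nat.mul_le_mul_left q i.isLt
        have hlt : q * (i : ℕ) + t < d := by omega
        exact ⟨⟨q * (i : ℕ) + t, hlt⟩,
          by simp only [hSdef, Finset.mem_filter, Finset.mem_univ, true_and]; omega, by simp⟩
    rw [key, Finset.card_range]
  refine ⟨?_, ?_, ?_⟩
  · -- (a) unbiasedness
    have hsum : (∑ π : Equiv.Perm (Fin d), C i π x)
        = (n : ℝ) • ∑ j ∈ S, ∑ π : Equiv.Perm (Fin d),
            EuclideanSpace.single (π j) (x (π j)) := by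
      simp_rw [hC, ← Finset.smul_sum]
      rw [Finset.sum_comm]
    rw [hsum]
    have hinner : ∀ j : Fin d, (∑ π : Equiv.Perm (Fin d),
        EuclideanSpace.single (π j) (x (π j))) = (d - 1).factorial • x := by
      intro j
      rw [sum_perm_apply hd0 (fun k => EuclideanSpace.single k (x k)) j, hxsum]
    rw [Finset.sum_congr rfl (fun j _ => hinner j), Finset.sum_const, hScard, hN]
    rw [← Nat.cast_smul_eq_nsmul ℝ, ← Nat.cast_smul_eq_nsmul ℝ, smul_smul, smul_smul, smul_smul]
    have h1 : (d.factorial : ℝ)⁻¹ * (n : ℝ) * (q : ℝ) * ((d - 1).factorial : ℝ) = 1 := by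
      rw [hfact]; field_simp
    rw [h1, one_smul]
  · -- (b) variance
    have hA : ∀ π : Equiv.Perm (Fin d), ‖C i π x - x‖ ^ 2
        = ((n : ℝ) ^ 2 - 2 * n) * (∑ j ∈ S, (x (π j)) ^ 2) + ‖x‖ ^ 2 := by
      intro π
      have hinj : ∀ a ∈ S, ∀ b ∈ S, π a = π b → a = b := fun a _ b _ h => π.injective h
      set T : Finset (Fin d) := S.image π with hTdef
      have hcoord : ∀ m : Fin d, C i π x m = if m ∈ T then (n : ℝ) * x m else 0 := by
        intro m
        rw [hC, PiLp.smul_apply, WithLp.ofLp_sum, Finset.sum_apply]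
        have : (∑ j ∈ S, EuclideanSpace.single (π j) (x (π j)) m)
            = ∑ k ∈ T, (if m = k then x k else 0) := by
          rw [hTdef, Finset.sum_image hinj]
          exact Finset.sum_congr rfl fun j _ => by rw [EuclideanSpace.single_apply]
        rw [this, Finset.sum_ite_eq, smul_eq_mul, mul_ite, mul_zero]
      have hsubc : ∀ m : Fin d, (C i π x - x) m = C i π x m - x m := fun m => rfl
      have hTsum : (∑ m ∈ T, (x m) ^ 2) = ∑ j ∈ S, (x (π j)) ^ 2 := by
        rw [hTdef, Finset.sum_image hinj]
      have hsplit : ∑ m, (x m) ^ 2 = ∑ m ∈ T, (x m) ^ 2 + ∑ m ∈ Tᶜ, (x m) ^ 2 :=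
        (Finset.sum_add_sum_compl T _).symm
      rw [hns]
      calc ∑ m, ((C i π x - x) m) ^ 2
          = ∑ m ∈ T, ((C i π x - x) m) ^ 2 + ∑ m ∈ Tᶜ, ((C i π x - x) m) ^ 2 :=
            (Finset.sum_add_sum_compl T _).symm
        _ = ((n : ℝ) - 1) ^ 2 * (∑ j ∈ S, (x (π j)) ^ 2) + ∑ m ∈ Tᶜ, (x m) ^ 2 := by
            congr 1
            · rw [Finset.mul_sum, hTdef, Finset.sum_image hinj]
              refine Finset.sum_congr rfl fun j hj => ?_
              rw [hsubc, hcoord, if_pos (Finset.mem_image_of_mem π hj)]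
              ring
            · refine Finset.sum_congr rfl fun m hm => ?_
              rw [hsubc, hcoord, if_neg (by simpa using hm)]
              ring
        _ = ((n : ℝ) ^ 2 - 2 * n) * (∑ j ∈ S, (x (π j)) ^ 2) + ‖x‖ ^ 2 := by
            rw [hns x, hsplit, hTsum]; ring
    simp_rw [hA]
    rw [Finset.sum_add_distrib, Finset.sum_const, ← Finset.mul_sum, Finset.sum_comm]
    have hinner : ∀ j : Fin d, (∑ π : Equiv.Perm (Fin d), (x (π j)) ^ 2)
        = ((d - 1).factorial : ℝ) * ‖x‖ ^ 2 := by
      intro j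
      rw [sum_perm_apply hd0 (fun k => (x k) ^ 2) j, nsmul_eq_mul, hns x]
    rw [Finset.sum_congr rfl (fun j _ => hinner j), Finset.sum_const, hScard, hN,
      Finset.card_univ, Fintype.card_perm, Fintype.card_fin, nsmul_eq_mul, nsmul_eq_mul]
    rw [hfact]
    field_simp
    ring
  · -- (c) deterministic reconstruction
    intro π
    have hpart : ∀ F : Fin d → EuclideanSpace ℝ (Fin d),
        (∑ i' : Fin n, ∑ j ∈ Finset.univ.filter
            (fun j : Fin d => q * (i' : ℕ) ≤ (j : ℕ) ∧ (j : ℕ) < q * ((i' : ℕ) + 1)), F j)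
        = ∑ j : Fin d, F j := by
      intro F
      simp_rw [Finset.sum_filter]
      rw [Finset.sum_comm]
      refine Finset.sum_congr rfl fun j _ => ?_
      have hi0lt : (j : ℕ) / q < n := (Nat.div_lt_iff_lt_mul hq).mpr (by
        have hj := j.isLt
        have hcomm : n * q = q * n := Nat.mul_comm n q
        omega)
      set i₀ : Fin n := ⟨(j : ℕ) / q, hi0lt⟩ with hi0
      have hdm := Nat.div_add_mod (j : ℕ) q
      have hml : (j : ℕ) % q < q := Nat.mod_lt _ hq
      rw [Finset.sum_eq_single i₀]
      · rw [if_pos]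
        refine ⟨?_, ?_⟩
        · show q * ((j : ℕ) / q) ≤ (j : ℕ); omega
        · show (j : ℕ) < q * ((j : ℕ) / q + 1)
          rw [Nat.mul_add, Nat.mul_one]; omega
      · intro b _ hb
        rw [if_neg]
        rintro ⟨h1, h2⟩
        have hmu : q * ((b : ℕ) + 1) = ((b : ℕ) + 1) * q := by ring
        have hc1 : q * (b : ℕ) = (b : ℕ) * q := Nat.mul_comm q b
        have : (j : ℕ) / q = (b : ℕ) :=
          Nat.div_eq_of_lt_le (by omega) (by omega)
        exact hb (Fin.ext (by simp [hi0, this]))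
      · intro h; exact absurd (Finset.mem_univ i₀) h
    have : (∑ i' : Fin n, C i' π x)
        = (n : ℝ) • ∑ j : Fin d, EuclideanSpace.single (π j) (x (π j)) := by
      simp_rw [hC, ← Finset.smul_sum]
      rw [hpart (fun j => EuclideanSpace.single (π j) (x (π j)))]
    rw [this, Equiv.sum_comp π (fun k => EuclideanSpace.single k (x k)), hxsum,
      smul_smul, inv_mul_cancel₀ hn', one_smul]
end

section
/- Assume the functions f_i : R^d -> R are twice continuously differentiable, each L_i-smooth, and there exist D_i ≥ 0 such that for all z_1,...,z_n ∈ R^d and each i, ||∇²f_i(z_i) - (1/n) Σ_{j=1}^n ∇²f_j(z_j)|| ≤ D_i (operator norm). Then for all x, u_1,...,u_n ∈ R^d: ||(1/n) Σ_{i=1}^n (∇f_i(x+u_i) - ∇f_i(x))||^2 ≤ 2 (max_i D_i)^2 (1/n) Σ_{i=1}^n ||u_i||^2 + 2 ((1/n) Σ_{i=1}^n L_i)^2 ||(1/n) Σ_{i=1}^n u_i||^2. -/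
set_option maxHeartbeats 1000000


open scoped BigOperators

/-- If each `f i` is twice continuously differentiable, `L i`-smooth
(`‖∇²f_i(z)‖ ≤ L i`), and the Hessian dissimilarity is bounded:
`‖∇²f_i(z_i) - (1/n)∑_j ∇²f_j(z_j)‖ ≤ D i` for all `z_1,…,z_n`, then
`‖(1/n)∑(∇f_i(x+u_i)-∇f_i(x))‖² ≤ 2(max_i D_i)² (1/n)∑‖u_i‖²
  + 2((1/n)∑ L_i)² ‖(1/n)∑ u_i‖²`. -/
theorem stmt_14 {d n : ℕ} (hn : 0 < n)
    (f : Fin n → EuclideanSpace ℝ (Fin d) → ℝ)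
    (hC2 : ∀ i, ContDiff ℝ 2 (f i))
    (L D : Fin n → ℝ) (hD0 : ∀ i, 0 ≤ D i)
    (hL : ∀ i (z : EuclideanSpace ℝ (Fin d)), ‖fderiv ℝ (gradient (f i)) z‖ ≤ L i)
    (hHess : ∀ i (z : Fin n → EuclideanSpace ℝ (Fin d)),
      ‖fderiv ℝ (gradient (f i)) (z i)
          - (n : ℝ)⁻¹ • (∑ j, fderiv ℝ (gradient (f j)) (z j))‖ ≤ D i)
    (x : EuclideanSpace ℝ (Fin d)) (u : Fin n → EuclideanSpace ℝ (Fin d)) :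
    ‖(n : ℝ)⁻¹ • (∑ i, (gradient (f i) (x + u i) - gradient (f i) x))‖ ^ 2
      ≤ 2 * (Finset.univ.sup' (Finset.univ_nonempty_iff.mpr ⟨⟨0, hn⟩⟩) D) ^ 2
            * ((n : ℝ)⁻¹ * ∑ i, ‖u i‖ ^ 2)
        + 2 * ((n : ℝ)⁻¹ * ∑ i, L i) ^ 2 * ‖(n : ℝ)⁻¹ • (∑ i, u i)‖ ^ 2 := by
  classical
  set Dm := Finset.univ.sup' (Finset.univ_nonempty_iff.mpr ⟨⟨0, hn⟩⟩) D with hDmdef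
  -- the gradient of each `f i` is C¹
  have hgradC1 : ∀ i, ContDiff ℝ 1 (gradient (f i)) := by
    intro i
    have h1 : ContDiff ℝ 1 (fderiv ℝ (f i)) := (hC2 i).fderiv_right (by norm_num)
    have heq : gradient (f i)
        = fun y => (InnerProductSpace.toDual ℝ (EuclideanSpace ℝ (Fin d))).symm (fderiv ℝ (f i) y) := rfl
    rw [heq]
    exact (InnerProductSpace.toDual ℝ (EuclideanSpace ℝ (Fin d))).symm.contDiff.comp h1
  have hHcont : ∀ i, Continuous (fun z => fderiv ℝ (gradient (f i)) z) :=
    fun i => (hgradC1 i).continuous_fderiv one_ne_zero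
  -- the integrand
  set g' : Fin n → ℝ → EuclideanSpace ℝ (Fin d) :=
    fun i t => (fderiv ℝ (gradient (f i)) (x + t • u i)) (u i) with hg'
  have hcont' : ∀ i, Continuous (g' i) := by
    intro i
    exact ((hHcont i).comp (continuous_const.add (continuous_id.smul
      continuous_const))).clm_apply continuous_const
  -- fundamental theorem of calculus for each i
  have key : ∀ i, gradient (f i) (x + u i) - gradient (f i) x
      = ∫ t in (0:ℝ)..1, g' i t := by
    intro i
    have hderiv : ∀ t ∈ Set.uIcc (0:ℝ) 1,
        HasDerivAt (fun t : ℝ => gradient (f i) (x + t • u i)) (g' i t) t := by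
      intro t _
      have hline : HasDerivAt (fun t : ℝ => x + t • u i) (u i) t := by
        simpa using ((hasDerivAt_id t).smul_const (u i)).const_add x
      have hF : HasFDerivAt (gradient (f i))
          (fderiv ℝ (gradient (f i)) (x + t • u i)) (x + t • u i) :=
        (((hgradC1 i).differentiable one_ne_zero) (x + t • u i)).hasFDerivAt
      exact hF.comp_hasDerivAt t hline
    have := intervalIntegral.integral_eq_sub_of_hasDerivAt hderiv
      ((hcont' i).intervalIntegrable 0 1)
    rw [this]
    simp
  -- express the averaged difference as an integral
  have hv : (n:ℝ)⁻¹ • (∑ i, (gradient (f i) (x + u i) - gradient (f i) x))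
      = ∫ t in (0:ℝ)..1, (n:ℝ)⁻¹ • ∑ i, g' i t := by
    rw [intervalIntegral.integral_smul, intervalIntegral.integral_finset_sum
      (fun i _ => (hcont' i).intervalIntegrable 0 1)]
    congr 1
    exact Finset.sum_congr rfl (fun i _ => key i)
  have hDm0 : 0 ≤ Dm := le_trans (hD0 ⟨0, hn⟩) (Finset.le_sup' D (Finset.mem_univ _))
  have hDle : ∀ i, D i ≤ Dm := fun i => Finset.le_sup' D (Finset.mem_univ i)
  have hL0 : ∀ i, 0 ≤ L i := fun i => le_trans (norm_nonneg _) (hL i x)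
  have hnpos : (0:ℝ) < n := by exact_mod_cast hn
  set A := (n:ℝ)⁻¹ * ∑ i, ‖u i‖ with hA
  set B := ‖(n:ℝ)⁻¹ • (∑ i, u i)‖ with hB
  set Lb := (n:ℝ)⁻¹ * ∑ i, L i with hLb
  have hLb0 : 0 ≤ Lb := by
    apply mul_nonneg (by positivity)
    exact Finset.sum_nonneg fun i _ => hL0 i
  have hA0 : 0 ≤ A := by
    apply mul_nonneg (by positivity)
    exact Finset.sum_nonneg fun i _ => norm_nonneg _
  -- pointwise bound on the integrand
  have hbound : ∀ t ∈ Set.uIoc (0:ℝ) 1,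
      ‖(n:ℝ)⁻¹ • ∑ i, g' i t‖ ≤ Dm * A + Lb * B := by
    intro t _
    set z : Fin n → EuclideanSpace ℝ (Fin d) := fun j => x + t • u j with hz
    set Hbar : EuclideanSpace ℝ (Fin d) →L[ℝ] EuclideanSpace ℝ (Fin d) := (n:ℝ)⁻¹ • ∑ j, fderiv ℝ (gradient (f j)) (z j) with hHbar
    have split : (n:ℝ)⁻¹ • ∑ i, g' i t
        = ((n:ℝ)⁻¹ • ∑ i, (fderiv ℝ (gradient (f i)) (z i) - Hbar) (u i))
          + Hbar ((n:ℝ)⁻¹ • ∑ i, u i) := by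
      simp only [hg', ContinuousLinearMap.sub_apply, Finset.sum_sub_distrib,
        map_smul, map_sum, smul_sub, hz]
      abel
    rw [split]
    have h1 : ‖(n:ℝ)⁻¹ • ∑ i, (fderiv ℝ (gradient (f i)) (z i) - Hbar) (u i)‖
        ≤ Dm * A := by
      rw [norm_smul]
      have : ‖∑ i, (fderiv ℝ (gradient (f i)) (z i) - Hbar) (u i)‖
          ≤ ∑ i, Dm * ‖u i‖ := by
        refine le_trans (norm_sum_le _ _) (Finset.sum_le_sum fun i _ => ?_)
        refine le_trans (ContinuousLinearMap.le_opNorm _ _) ?_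
        exact mul_le_mul (le_trans (hHess i z) (hDle i)) le_rfl (norm_nonneg _) hDm0
      calc ‖(n:ℝ)⁻¹‖ * ‖∑ i, (fderiv ℝ (gradient (f i)) (z i) - Hbar) (u i)‖
          ≤ (n:ℝ)⁻¹ * (∑ i, Dm * ‖u i‖) := by
            rw [Real.norm_eq_abs, abs_of_nonneg (by positivity)]
            exact mul_le_mul_of_nonneg_left this (by positivity)
        _ = Dm * A := by rw [← Finset.mul_sum, hA]; ring
    have h2 : ‖Hbar ((n:ℝ)⁻¹ • ∑ i, u i)‖ ≤ Lb * B := by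
      refine le_trans (ContinuousLinearMap.le_opNorm _ _) ?_
      refine mul_le_mul ?_ le_rfl (norm_nonneg _) hLb0
      rw [hHbar]
      refine le_trans (ContinuousLinearMap.opNorm_smul_le _ _) ?_
      rw [Real.norm_eq_abs, abs_of_nonneg (by positivity), hLb]
      refine mul_le_mul_of_nonneg_left ?_ (by positivity)
      exact le_trans (norm_sum_le _ _) (Finset.sum_le_sum fun j _ => hL j (z j))
    exact le_trans (norm_add_le _ _) (add_le_add h1 h2)
  have hnormv : ‖(n:ℝ)⁻¹ • (∑ i, (gradient (f i) (x + u i) - gradient (f i) x))‖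
      ≤ Dm * A + Lb * B := by
    rw [hv]
    have := intervalIntegral.norm_integral_le_of_norm_le_const hbound
    simpa using this
  -- Cauchy–Schwarz: square of the average ≤ average of squares
  have hA2 : A ^ 2 ≤ (n:ℝ)⁻¹ * ∑ i, ‖u i‖ ^ 2 := by
    have h1 : (∑ i, ‖u i‖) ^ 2 ≤ (n:ℝ) * ∑ i, ‖u i‖ ^ 2 := by
      have := sq_sum_le_card_mul_sum_sq (s := (Finset.univ : Finset (Fin n)))
        (f := fun i => ‖u i‖)
      simpa using this
    rw [hA, mul_pow]
    calc ((n:ℝ)⁻¹) ^ 2 * (∑ i, ‖u i‖) ^ 2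
        ≤ ((n:ℝ)⁻¹) ^ 2 * ((n:ℝ) * ∑ i, ‖u i‖ ^ 2) :=
          mul_le_mul_of_nonneg_left h1 (by positivity)
      _ = (n:ℝ)⁻¹ * ∑ i, ‖u i‖ ^ 2 := by field_simp
  have hsq : ‖(n:ℝ)⁻¹ • (∑ i, (gradient (f i) (x + u i) - gradient (f i) x))‖ ^ 2
      ≤ (Dm * A + Lb * B) ^ 2 := pow_le_pow_left₀ (norm_nonneg _) hnormv 2
  have hkey : Dm ^ 2 * A ^ 2 ≤ Dm ^ 2 * ((n:ℝ)⁻¹ * ∑ i, ‖u i‖ ^ 2) :=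
    mul_le_mul_of_nonneg_left hA2 (by positivity)
  nlinarith [hsq, hkey, sq_nonneg (Dm * A - Lb * B), sq_nonneg B, sq_nonneg Lb]
end

section
/- Let C_i^t ∈ U(ω_P) for all i ∈ [n] (unbiased compressors with variance parameter ω_P), and let the MARINA-P update set w_i^{t+1} = x^{t+1} with probability p and w_i^{t+1} = w_i^t + C_i^t(x^{t+1} - x^t) with probability 1-p (same coin for all i). Then (1/n) Σ_{i=1}^n E[||w_i^{t+1} - x^{t+1}||^2] ≤ (1-p) (1/n) Σ_{i=1}^n E[||w_i^t - x^t||^2] + (1-p) ω_P E[||x^{t+1} - x^t||^2]. -/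
open MeasureTheory ProbabilityTheory
open scoped BigOperators RealInnerProductSpace ENNReal

private lemma sq_integrable {Ω : Type*} [MeasurableSpace Ω] {μ : Measure Ω}
    {E : Type*} [NormedAddCommGroup E] {f : Ω → E} (hf : MemLp f 2 μ) :
    Integrable (fun a => ‖f a‖ ^ 2) μ := by
  have h := hf.integrable_norm_rpow (by norm_num) (by norm_num)
  have h2 : ((2 : ℝ≥0∞)).toReal = ((2 : ℕ) : ℝ) := by norm_num
  simpa [h2, Real.rpow_natCast] using h

/-- Lemma on the MARINA-P control variables, per-worker version:
with unbiased compressors `C_i ∈ U(ω_P)` and the update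
`w_i^{t+1} = x^{t+1}` w.p. `p` (same coin for all `i`), else
`w_i^{t+1} = w_i^t + C_i(x^{t+1} - x^t)`, we get
`(1/n)∑ E‖w_i^{t+1} - x^{t+1}‖² ≤ (1-p)(1/n)∑ ‖w_i^t - x^t‖² + (1-p) ω_P ‖x^{t+1}-x^t‖²`. -/
theorem stmt_17 {d n : ℕ} (hn : 0 < n) {Ω : Type*} [MeasurableSpace Ω]
    (μ : Measure Ω) [IsProbabilityMeasure μ]
    (ωP p : ℝ) (hωP : 0 ≤ ωP) (hp0 : 0 ≤ p) (hp1 : p ≤ 1)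
    (C : Fin n → EuclideanSpace ℝ (Fin d) → Ω → EuclideanSpace ℝ (Fin d))
    (coin : Ω → Bool) (hcoin_meas : Measurable coin)
    (hcoin : μ {a | coin a = true} = ENNReal.ofReal p)
    (hL2 : ∀ i v, MemLp (C i v) 2 μ)
    (hunb : ∀ i v, (∫ a, C i v a ∂μ) = v)
    (hvar : ∀ i v, (∫ a, ‖C i v a - v‖ ^ 2 ∂μ) ≤ ωP * ‖v‖ ^ 2)
    (wt : Fin n → EuclideanSpace ℝ (Fin d)) (xt xt1 : EuclideanSpace ℝ (Fin d))
    (hind : ∀ i, IndepFun coin (C i (xt1 - xt)) μ)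
    (w1 : Fin n → Ω → EuclideanSpace ℝ (Fin d))
    (hw1 : ∀ i a, w1 i a = if coin a then xt1 else wt i + C i (xt1 - xt) a) :
    (n : ℝ)⁻¹ * ∑ i, (∫ a, ‖w1 i a - xt1‖ ^ 2 ∂μ)
      ≤ (1 - p) * ((n : ℝ)⁻¹ * ∑ i, ‖wt i - xt‖ ^ 2)
        + (1 - p) * ωP * ‖xt1 - xt‖ ^ 2 := by
  set Δ : EuclideanSpace ℝ (Fin d) := xt1 - xt with hΔ
  have hmsT : MeasurableSet {a | coin a = true} :=
    hcoin_meas (measurableSet_singleton true)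
  have hmsF : MeasurableSet {a | coin a = false} :=
    hcoin_meas (measurableSet_singleton false)
  have hμfalse : (μ {a | coin a = false}).toReal = 1 - p := by
    have hcompl : {a | coin a = false} = {a | coin a = true}ᶜ := by
      ext a
      simp only [Set.mem_setOf_eq, Set.mem_compl_iff, Bool.not_eq_true]
    rw [hcompl, prob_compl_eq_one_sub hmsT, hcoin]
    rw [ENNReal.toReal_sub_of_le (by simpa using ENNReal.ofReal_le_one.mpr hp1)
      (by simp)]
    simp [ENNReal.toReal_ofReal hp0]
  have key : ∀ i, (∫ a, ‖w1 i a - xt1‖ ^ 2 ∂μ)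
      ≤ (1 - p) * (‖wt i - xt‖ ^ 2 + ωP * ‖Δ‖ ^ 2) := by
    intro i
    set X : Ω → EuclideanSpace ℝ (Fin d) := C i Δ with hX
    set c : EuclideanSpace ℝ (Fin d) := wt i - xt with hc
    have hXL2 : MemLp X 2 μ := hL2 i Δ
    have hgL2 : MemLp (fun a => X a - Δ + c) 2 μ :=
      (hXL2.sub (memLp_const Δ)).add (memLp_const c)
    have hψmeas : Measurable fun v : EuclideanSpace ℝ (Fin d) => ‖v - Δ + c‖ ^ 2 := by
      fun_prop
    have hφmeas : Measurable fun b : Bool => if b then (0:ℝ) else 1 :=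
      measurable_from_top
    have hindf : IndepFun (fun a => if coin a then (0:ℝ) else 1)
        (fun a => ‖X a - Δ + c‖ ^ 2) μ :=
      (hind i).comp hφmeas hψmeas
    have hint2 : Integrable (fun a => ‖X a - Δ + c‖ ^ 2) μ := sq_integrable hgL2
    have hiff : (fun a => if coin a then (0:ℝ) else 1)
        = Set.indicator {a | coin a = false} (fun _ => (1:ℝ)) := by
      ext a; by_cases h : coin a = true <;> simp [Set.indicator, h] <;> simp_all
    have hint1 : Integrable (fun a => if coin a then (0:ℝ) else 1) μ := by
      rw [hiff]; exact (integrable_const (1:ℝ)).indicator hmsF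
    have heq : (∫ a, ‖w1 i a - xt1‖ ^ 2 ∂μ)
        = ∫ a, (if coin a then (0:ℝ) else 1) * ‖X a - Δ + c‖ ^ 2 ∂μ := by
      refine integral_congr_ae (Filter.Eventually.of_forall fun a => ?_)
      dsimp only
      rw [hw1 i a]
      by_cases h : coin a = true
      · simp [h]
      · have hv : wt i + X a - xt1 = X a - Δ + c := by
          simp only [hΔ, hc]; abel
        simp [h]; exact congrArg norm hv
    have hmul : (∫ a, (if coin a then (0:ℝ) else 1) * ‖X a - Δ + c‖ ^ 2 ∂μ)
        = (∫ a, (if coin a then (0:ℝ) else 1) ∂μ) * ∫ a, ‖X a - Δ + c‖ ^ 2 ∂μ :=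
      hindf.integral_fun_mul_eq_mul_integral hint1.aestronglyMeasurable hint2.aestronglyMeasurable
    have hindint : (∫ a, (if coin a then (0:ℝ) else 1) ∂μ) = 1 - p := by
      rw [hiff, integral_indicator_const (1:ℝ) hmsF, measureReal_def, hμfalse, smul_eq_mul, mul_one]
    -- expand the second moment
    have hXint : Integrable X μ := hXL2.integrable one_le_two
    have hgint : Integrable (fun a => X a - Δ) μ := hXint.sub (integrable_const Δ)
    have hsq : Integrable (fun a => ‖X a - Δ‖ ^ 2) μ :=
      sq_integrable (hXL2.sub (memLp_const Δ))
    have hinner : Integrable (fun a => 2 * ⟪c, X a - Δ⟫) μ := by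
      have := (hgint.const_inner (𝕜 := ℝ) c)
      simpa using this.const_mul 2
    have hmean : (∫ a, (X a - Δ) ∂μ) = 0 := by
      rw [integral_sub hXint (integrable_const Δ)]
      have h1 : (∫ a, X a ∂μ) = Δ := hunb i Δ
      rw [h1, integral_const]
      simp
    have hptwise : ∀ a, ‖X a - Δ + c‖ ^ 2
        = ‖X a - Δ‖ ^ 2 + 2 * ⟪c, X a - Δ⟫ + ‖c‖ ^ 2 := by
      intro a; rw [norm_add_sq_real, real_inner_comm]
    have hsplit : (∫ a, ‖X a - Δ + c‖ ^ 2 ∂μ)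
        = (∫ a, ‖X a - Δ‖ ^ 2 ∂μ) + (∫ a, 2 * ⟪c, X a - Δ⟫ ∂μ) + ‖c‖ ^ 2 := by
      have h1 : (∫ a, ‖X a - Δ + c‖ ^ 2 ∂μ)
          = ∫ a, (‖X a - Δ‖ ^ 2 + 2 * ⟪c, X a - Δ⟫ + ‖c‖ ^ 2) ∂μ :=
        integral_congr_ae (Filter.Eventually.of_forall hptwise)
      have hfg : Integrable (fun a => ‖X a - Δ‖ ^ 2 + 2 * ⟪c, X a - Δ⟫) μ :=
        hsq.add hinner
      rw [h1, integral_add hfg (integrable_const _),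
        integral_add hsq hinner, integral_const]
      simp
    have hzero : (∫ a, 2 * ⟪c, X a - Δ⟫ ∂μ) = 0 := by
      rw [integral_const_mul, integral_inner hgint, hmean, inner_zero_right, mul_zero]
    have hv2 : (∫ a, ‖X a - Δ‖ ^ 2 ∂μ) ≤ ωP * ‖Δ‖ ^ 2 := hvar i Δ
    have hexp : (∫ a, ‖X a - Δ + c‖ ^ 2 ∂μ) ≤ ‖c‖ ^ 2 + ωP * ‖Δ‖ ^ 2 := by
      rw [hsplit, hzero, add_zero]
      linarith
    rw [heq, hmul, hindint]
    exact mul_le_mul_of_nonneg_left hexp (by linarith)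
  -- assemble
  have hn' : (0:ℝ) < n := by exact_mod_cast hn
  have h1 : (n:ℝ)⁻¹ * (n:ℝ) = 1 := inv_mul_cancel₀ hn'.ne'
  have hsum : ∑ i, (∫ a, ‖w1 i a - xt1‖ ^ 2 ∂μ)
      ≤ ∑ i : Fin n, (1 - p) * (‖wt i - xt‖ ^ 2 + ωP * ‖Δ‖ ^ 2) :=
    Finset.sum_le_sum fun i _ => key i
  calc (n : ℝ)⁻¹ * ∑ i, (∫ a, ‖w1 i a - xt1‖ ^ 2 ∂μ)
      ≤ (n : ℝ)⁻¹ * ∑ i : Fin n, (1 - p) * (‖wt i - xt‖ ^ 2 + ωP * ‖Δ‖ ^ 2) :=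
        mul_le_mul_of_nonneg_left hsum (by positivity)
    _ = (1 - p) * ((n : ℝ)⁻¹ * ∑ i, ‖wt i - xt‖ ^ 2)
        + (1 - p) * ωP * ‖Δ‖ ^ 2 := by
        simp only [mul_add, Finset.sum_add_distrib, Finset.sum_const,
          Finset.card_univ, Fintype.card_fin, nsmul_eq_mul, ← Finset.mul_sum]
        linear_combination ((1 - p) * ωP * ‖Δ‖ ^ 2) * h1
end

section
/- Let {C_i^t}_{i=1}^n ∈ P(θ), i.e., each C_i^t is unbiased and E[||(1/n) Σ_i C_i^t(v) - v||^2] ≤ θ ||v||^2 for all v. With the MARINA-P update (w_i^{t+1} = x^{t+1} with probability p, otherwise w_i^{t+1} = w_i^t + C_i^t(x^{t+1} - x^t)) and w^t = (1/n) Σ_i w_i^t, it holds that E[||w^{t+1} - x^{t+1}||^2] ≤ (1-p) E[||w^t - x^t||^2] + (1-p) θ E[||x^{t+1} - x^t||^2]. -/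
open MeasureTheory ProbabilityTheory
open scoped BigOperators

/-- Lemma on the averaged MARINA-P control variable: with a collection
`{C_i} ∈ P(θ)` (each unbiased, and `E‖(1/n)∑ C_i(v) - v‖² ≤ θ‖v‖²`) and the update
`w_i^{t+1} = x^{t+1}` w.p. `p` (same coin for all `i`), else
`w_i^{t+1} = w_i^t + C_i(x^{t+1} - x^t)`, the average `w^t = (1/n)∑ w_i^t` satisfies
`E‖w^{t+1} - x^{t+1}‖² ≤ (1-p)‖w^t - x^t‖² + (1-p) θ ‖x^{t+1} - x^t‖²`. -/
theorem stmt_18 {d n : ℕ} (hn : 0 < n) {Ω : Type*} [MeasurableSpace Ω]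
    (μ : Measure Ω) [IsProbabilityMeasure μ]
    (θ p : ℝ) (hθ0 : 0 ≤ θ) (hp0 : 0 ≤ p) (hp1 : p ≤ 1)
    (C : Fin n → EuclideanSpace ℝ (Fin d) → Ω → EuclideanSpace ℝ (Fin d))
    (coin : Ω → Bool) (hcoin_meas : Measurable coin)
    (hcoin : μ {a | coin a = true} = ENNReal.ofReal p)
    (hL2 : ∀ i v, MemLp (C i v) 2 μ)
    (hunb : ∀ i v, (∫ a, C i v a ∂μ) = v)
    (hθ : ∀ v, (∫ a, ‖(n : ℝ)⁻¹ • (∑ i, C i v a) - v‖ ^ 2 ∂μ) ≤ θ * ‖v‖ ^ 2)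
    (wt : Fin n → EuclideanSpace ℝ (Fin d)) (xt xt1 : EuclideanSpace ℝ (Fin d))
    (hind : IndepFun coin (fun a => (n : ℝ)⁻¹ • (∑ i, C i (xt1 - xt) a)) μ)
    (w1 : Fin n → Ω → EuclideanSpace ℝ (Fin d))
    (hw1 : ∀ i a, w1 i a = if coin a then xt1 else wt i + C i (xt1 - xt) a) :
    (∫ a, ‖(n : ℝ)⁻¹ • (∑ i, w1 i a) - xt1‖ ^ 2 ∂μ)
      ≤ (1 - p) * ‖(n : ℝ)⁻¹ • (∑ i, wt i) - xt‖ ^ 2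
        + (1 - p) * θ * ‖xt1 - xt‖ ^ 2 := by
  have hn' : (n : ℝ) ≠ 0 := Nat.cast_ne_zero.mpr hn.ne'
  set v : EuclideanSpace ℝ (Fin d) := xt1 - xt with hv
  set A : EuclideanSpace ℝ (Fin d) := (n : ℝ)⁻¹ • (∑ i, wt i) - xt with hA
  set Y : Ω → EuclideanSpace ℝ (Fin d) := fun a => (n : ℝ)⁻¹ • (∑ i, C i v a) with hYdef
  have hYL2 : MemLp Y 2 μ := by
    have h := (memLp_finset_sum' Finset.univ (fun i _ => hL2 i v)).const_smul ((n:ℝ)⁻¹)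
    exact h.ae_eq (ae_of_all _ fun a => by simp [hYdef])
  have hZL2 : MemLp (fun a => Y a - v) 2 μ := hYL2.sub (memLp_const v)
  have hZint : Integrable (fun a => Y a - v) μ := hZL2.integrable one_le_two
  have hYint : Integrable Y μ := hYL2.integrable one_le_two
  have hZsq : Integrable (fun a => ‖Y a - v‖ ^ 2) μ :=
    (memLp_two_iff_integrable_sq_norm hZL2.aestronglyMeasurable).mp hZL2
  have hCint : ∀ i, Integrable (C i v) μ := fun i => (hL2 i v).integrable one_le_two
  have hEY : (∫ a, Y a ∂μ) = v := by
    rw [hYdef]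
    rw [integral_smul, integral_finset_sum _ (fun i _ => hCint i)]
    simp only [hunb, Finset.sum_const, Finset.card_univ, Fintype.card_fin]
    rw [← Nat.cast_smul_eq_nsmul ℝ, smul_smul, inv_mul_cancel₀ hn', one_smul]
  have key : ∀ a, ‖(n : ℝ)⁻¹ • (∑ i, w1 i a) - xt1‖ ^ 2
      = (if coin a then (0:ℝ) else 1) * ‖A + (Y a - v)‖ ^ 2 := by
    intro a
    by_cases h : coin a
    · simp only [hw1, if_pos h, zero_mul]
      rw [Finset.sum_const, Finset.card_univ, Fintype.card_fin,
        ← Nat.cast_smul_eq_nsmul ℝ, smul_smul, inv_mul_cancel₀ hn', one_smul]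
      simp
    · simp only [hw1, if_neg h, one_mul]
      congr 1
      rw [Finset.sum_add_distrib, smul_add, hA, hYdef, hv]
      abel_nf
  have φmeas : Measurable (fun b : Bool => if b then (0:ℝ) else 1) :=
    measurable_from_top
  have fcont : Continuous (fun y : EuclideanSpace ℝ (Fin d) => ‖A + (y - v)‖ ^ 2) := by
    fun_prop
  have hind2 : IndepFun (fun a => if coin a then (0:ℝ) else 1)
      (fun a => ‖A + (Y a - v)‖ ^ 2) μ :=
    hind.comp φmeas fcont.measurable
  have hmul : (∫ a, (if coin a then (0:ℝ) else 1) * ‖A + (Y a - v)‖ ^ 2 ∂μ)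
      = (∫ a, (if coin a then (0:ℝ) else 1) ∂μ)
        * ∫ a, ‖A + (Y a - v)‖ ^ 2 ∂μ :=
    hind2.integral_fun_mul_eq_mul_integral ((φmeas.comp hcoin_meas).aestronglyMeasurable)
      (fcont.comp_aestronglyMeasurable hYL2.aestronglyMeasurable)
  have hφ : (∫ a, (if coin a then (0:ℝ) else 1) ∂μ) = 1 - p := by
    have hs : MeasurableSet {a | coin a = true} :=
      hcoin_meas (measurableSet_singleton true)
    have hi : (fun a => if coin a then (0:ℝ) else 1)
        = Set.indicator ({a | coin a = true}ᶜ) (1 : Ω → ℝ) := by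
      ext a; by_cases h : coin a <;> simp [h, Set.indicator]
    rw [hi, integral_indicator_one hs.compl, measureReal_def,
      measure_compl hs (measure_ne_top μ _), measure_univ, hcoin,
      ENNReal.toReal_sub_of_le (ENNReal.ofReal_le_one.mpr hp1) ENNReal.one_ne_top,
      ENNReal.toReal_one, ENNReal.toReal_ofReal hp0]
  have hinnerInt : Integrable (fun a => (inner ℝ A (Y a - v) : ℝ)) μ :=
    (innerSL ℝ A).integrable_comp hZint
  have hinner : (∫ a, (inner ℝ A (Y a - v) : ℝ) ∂μ) = 0 := by
    rw [integral_inner hZint]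
    have h0 : (∫ a, (Y a - v) ∂μ) = 0 := by
      rw [integral_sub hYint (integrable_const v), hEY, integral_const, probReal_univ]
      simp
    rw [h0, inner_zero_right]
  have hθ' : (∫ a, ‖Y a - v‖ ^ 2 ∂μ) ≤ θ * ‖v‖ ^ 2 := hθ v
  have hf : (∫ a, ‖A + (Y a - v)‖ ^ 2 ∂μ) ≤ ‖A‖ ^ 2 + θ * ‖v‖ ^ 2 := by
    have hexp : ∀ a, ‖A + (Y a - v)‖ ^ 2
        = ‖A‖ ^ 2 + 2 * (inner ℝ A (Y a - v) : ℝ) + ‖Y a - v‖ ^ 2 :=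
      fun a => norm_add_sq_real A (Y a - v)
    calc (∫ a, ‖A + (Y a - v)‖ ^ 2 ∂μ)
        = ∫ a, (‖A‖ ^ 2 + 2 * (inner ℝ A (Y a - v) : ℝ) + ‖Y a - v‖ ^ 2) ∂μ := by
          simp only [hexp]
      _ = ‖A‖ ^ 2 + 2 * (∫ a, (inner ℝ A (Y a - v) : ℝ) ∂μ)
            + ∫ a, ‖Y a - v‖ ^ 2 ∂μ := by
          have hint1 : Integrable
              (fun a => ‖A‖ ^ 2 + 2 * (inner ℝ A (Y a - v) : ℝ)) μ := by
            exact (integrable_const _).add (hinnerInt.const_mul 2)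
          rw [integral_add hint1 hZsq,
            integral_add (integrable_const _) (hinnerInt.const_mul 2),
            integral_const, probReal_univ, integral_const_mul]
          simp
      _ ≤ ‖A‖ ^ 2 + θ * ‖v‖ ^ 2 := by rw [hinner]; simpa using hθ'
  have h1p : (0:ℝ) ≤ 1 - p := by linarith
  calc (∫ a, ‖(n : ℝ)⁻¹ • (∑ i, w1 i a) - xt1‖ ^ 2 ∂μ)
      = ∫ a, (if coin a then (0:ℝ) else 1) * ‖A + (Y a - v)‖ ^ 2 ∂μ := by
        simp only [key]
    _ = (1 - p) * ∫ a, ‖A + (Y a - v)‖ ^ 2 ∂μ := by rw [hmul, hφ]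
    _ ≤ (1 - p) * (‖A‖ ^ 2 + θ * ‖v‖ ^ 2) := mul_le_mul_of_nonneg_left hf h1p
    _ = (1 - p) * ‖A‖ ^ 2 + (1 - p) * θ * ‖v‖ ^ 2 := by ring
end
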